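/- In a directed graph with source s, if u dominates v and w dominates v with u ≠ w and both u,w ≠ v, then either u dominates w or w dominates u; consequently, every vertex v ≠ s reachable from s has a unique immediate dominator. -/

import Mathlib

/-!
Dominators in a directed graph `g : V → V → Prop` with a source vertex `s`.
-/

open Finset

noncomputable section
open scoped Classical

variable {V : Type*}

/-- `w` is reachable from `s` in the directed graph `g`. -/
def Reach (g : V → V → Prop) (s w : V) : Prop :=
  Relation.ReflTransGen g s w

/-- `w` is reachable from `s` in `g` by a path avoiding the vertex `u`. -/
def ReachAvoid (g : V → V → Prop) (u s w : V) : Prop :=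
  Relation.ReflTransGen (fun a b => g a b ∧ a ≠ u ∧ b ≠ u) s w

/-- `u` dominates `v` (w.r.t. source `s`): `v` is reachable from `s` and every
path from `s` to `v` passes through `u`. -/
def Dominates (g : V → V → Prop) (s u v : V) : Prop :=
  Reach g s v ∧ (u = v ∨ ¬ ReachAvoid g u s v)

/-- `u` is the immediate dominator of `v`: `u` is a dominator of `v` other than
`v`, and every other dominator of `v` dominates `u`. -/
def IsIdom (g : V → V → Prop) (s u v : V) : Prop :=
  Dominates g s u v ∧ u ≠ v ∧ ∀ w, Dominates g s w v → w ≠ v → Dominates g s w u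

/-- `v` lies in the subtree rooted at `u` of the dominator tree of `g` with
source `s` (i.e. `u` is an ancestor of `v`, or `v` itself, along immediate
dominator edges). -/
def InDomSubtree (g : V → V → Prop) (s u v : V) : Prop :=
  Relation.ReflTransGen (fun a b => IsIdom g s a b) u v

section Aux
variable {g : V → V → Prop} {s u w v x : V}

lemma aux_rtg_ne {r : V → V → Prop} (hr : ∀ a b, r a b → b ≠ u)
    (h : Relation.ReflTransGen r s x) (hs : s ≠ u) : x ≠ u := by
  induction h with
  | refl => exact hs
  | tail _ h' _ => exact hr _ _ h'

lemma aux_reachAvoid_ne (h : ReachAvoid g u s x) (hs : s ≠ u) : x ≠ u :=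
  aux_rtg_ne (fun _ _ hab => hab.2.2) h hs

lemma aux_reachAvoid_self (h : ReachAvoid g u s u) : s = u := by
  by_contra hs
  exact aux_reachAvoid_ne h hs rfl

lemma aux_reach_dominator (h : Reach g s x) : ReachAvoid g u s x ∨ Reach g s u := by
  induction h with
  | refl => exact Or.inl .refl
  | @tail x' x hx' hedge ih =>
    rcases ih with h1 | h1
    · by_cases hx : x = u
      · exact Or.inr (hx ▸ hx'.tail hedge)
      · by_cases hx'u : x' = u
        · rw [hx'u] at h1
          exact Or.inr (by rw [show s = u from aux_reachAvoid_self h1]; exact .refl)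
        · exact Or.inl (h1.tail ⟨hedge, hx'u, hx⟩)
    · exact Or.inr h1

lemma aux_lemD (h : ReachAvoid g u s x) : ReachAvoid g w s x ∨ ReachAvoid g u s w := by
  induction h with
  | refl => exact Or.inl .refl
  | @tail x' x hx' hedge ih =>
    rcases ih with h1 | h1
    · by_cases hx : x = w
      · exact Or.inr (hx ▸ hx'.tail hedge)
      · by_cases hx'w : x' = w
        · rw [hx'w] at h1
          exact Or.inr (by rw [show s = w from aux_reachAvoid_self h1]; exact .refl)
        · exact Or.inl (h1.tail ⟨hedge.1, hx'w, hx⟩)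
    · exact Or.inr h1

lemma aux_lemE (hu : s ≠ u) (hw : s ≠ w) (P : ReachAvoid g u s w)
    (Q : ReachAvoid g w s u) (h : Reach g s x) :
    ReachAvoid g u s x ∨ ReachAvoid g w s x := by
  induction h with
  | refl => exact Or.inl .refl
  | @tail x' x hx' hedge ih =>
    rcases ih with h1 | h1
    · by_cases hx : x = u
      · exact Or.inr (hx ▸ Q)
      · exact Or.inl (h1.tail ⟨hedge, aux_reachAvoid_ne h1 hu, hx⟩)
    · by_cases hx : x = w
      · exact Or.inl (hx ▸ P)
      · exact Or.inr (h1.tail ⟨hedge, aux_reachAvoid_ne h1 hw, hx⟩)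

lemma aux_not_reachAvoid_source (hv : x ≠ s) : ¬ ReachAvoid g s s x := fun h => by
  rcases Relation.ReflTransGen.cases_head h with h | ⟨b, hb, _⟩
  · exact hv h.symm
  · exact hb.2.1 rfl

lemma aux_dominates_reach (h : Dominates g s u v) : Reach g s u := by
  rcases h with ⟨hr, h2 | h2⟩
  · exact h2 ▸ hr
  · rcases aux_reach_dominator hr with h | h
    · exact absurd h h2
    · exact h

lemma aux_source_dominates (hr : Reach g s v) : Dominates g s s v := by
  refine ⟨hr, ?_⟩
  by_cases h : s = v
  · exact Or.inl h
  · exact Or.inr (aux_not_reachAvoid_source (Ne.symm h))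

lemma aux_dominates_trans (h1 : Dominates g s u w) (h2 : Dominates g s w x) :
    Dominates g s u x := by
  refine ⟨h2.1, ?_⟩
  by_cases hux : u = x
  · exact Or.inl hux
  refine Or.inr fun hra => ?_
  rcases h2.2 with hw | hw
  · rcases h1.2 with h | h
    · exact hux (h.trans hw)
    · exact h (hw ▸ hra)
  · rcases aux_lemD (w := w) hra with h | h
    · exact hw h
    · rcases h1.2 with h' | h'
      · exact hw (h' ▸ hra)
      · exact h' h

lemma aux_dominates_antisymm (h1 : Dominates g s u w) (h2 : Dominates g s w u) :
    u = w := by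
  by_contra hne
  have hnra1 : ¬ ReachAvoid g u s w := h1.2.resolve_left hne
  have hnra2 : ¬ ReachAvoid g w s u := h2.2.resolve_left (Ne.symm hne)
  have hsu : s ≠ u := fun h => hnra2 (h ▸ Relation.ReflTransGen.refl)
  have hsw : s ≠ w := fun h => hnra1 (h ▸ Relation.ReflTransGen.refl)
  have key : ∀ x, Reach g s x →
      Relation.ReflTransGen (fun a b => g a b ∧ a ≠ u ∧ b ≠ u ∧ a ≠ w ∧ b ≠ w) s x
        ∨ ReachAvoid g u s w ∨ ReachAvoid g w s u := by
    intro x hx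
    induction hx with
    | refl => exact Or.inl .refl
    | @tail x' x hx' hedge ih =>
      rcases ih with h | h
      · have hx'u : x' ≠ u := aux_rtg_ne (fun _ _ hab => hab.2.2.1) h hsu
        have hx'w : x' ≠ w := aux_rtg_ne (fun _ _ hab => hab.2.2.2.2) h hsw
        have hwavoid : ReachAvoid g w s x' :=
          Relation.ReflTransGen.mono (p := fun a b => g a b ∧ a ≠ w ∧ b ≠ w) (fun a b (hab : g a b ∧ a ≠ u ∧ b ≠ u ∧ a ≠ w ∧ b ≠ w) => (⟨hab.1, hab.2.2.2.1, hab.2.2.2.2⟩ : g a b ∧ a ≠ w ∧ b ≠ w)) s x' h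
        have huavoid : ReachAvoid g u s x' :=
          Relation.ReflTransGen.mono (p := fun a b => g a b ∧ a ≠ u ∧ b ≠ u) (fun a b (hab : g a b ∧ a ≠ u ∧ b ≠ u ∧ a ≠ w ∧ b ≠ w) => (⟨hab.1, hab.2.1, hab.2.2.1⟩ : g a b ∧ a ≠ u ∧ b ≠ u)) s x' h
        by_cases hxu : x = u
        · subst hxu
          exact Or.inr (Or.inr (hwavoid.tail ⟨hedge, hx'w, hne⟩))
        · by_cases hxw : x = w
          · subst hxw
            exact Or.inr (Or.inl (huavoid.tail ⟨hedge, hx'u, fun h' => hne h'.symm⟩))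
          · exact Or.inl (h.tail ⟨hedge, hx'u, hxu, hx'w, hxw⟩)
      · exact Or.inr h
  rcases key u (aux_dominates_reach h1) with h | h | h
  · exact aux_rtg_ne (fun _ _ hab => hab.2.2.1) h hsu rfl
  · exact hnra1 h
  · exact hnra2 h

lemma aux_dom_comparable (hu : Dominates g s u v) (hw : Dominates g s w v)
    (huw : u ≠ w) (huv : u ≠ v) (hwv : w ≠ v) :
    Dominates g s u w ∨ Dominates g s w u := by
  have hru : Reach g s u := aux_dominates_reach hu
  have hrw : Reach g s w := aux_dominates_reach hw
  by_cases hsu : s = u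
  · exact Or.inl (hsu ▸ aux_source_dominates hrw)
  by_cases hsw : s = w
  · exact Or.inr (hsw ▸ aux_source_dominates hru)
  by_cases hP : ReachAvoid g u s w
  · refine Or.inr ⟨hru, Or.inr fun Q => ?_⟩
    rcases aux_lemE hsu hsw hP Q hu.1 with h | h
    · exact (hu.2.resolve_left huv) h
    · exact (hw.2.resolve_left hwv) h
  · exact Or.inl ⟨hrw, Or.inr hP⟩

lemma aux_exists_min (v : V) :
    ∀ (t : Finset V), (ht : t.Nonempty) →
      (∀ a ∈ t, Dominates g s a v ∧ a ≠ v) →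
      ∃ u ∈ t, ∀ w ∈ t, Dominates g s w u := by
  intro t ht
  induction ht using Finset.Nonempty.cons_induction with
  | singleton a =>
    intro hdom
    refine ⟨a, Finset.mem_singleton_self a, fun w hw => ?_⟩
    obtain rfl := Finset.mem_singleton.1 hw
    exact ⟨aux_dominates_reach (hdom _ (Finset.mem_singleton_self _)).1, Or.inl rfl⟩
  | cons a t hat ht ih =>
    intro hdom
    obtain ⟨u, hut, hmin⟩ := ih fun b hb => hdom b (Finset.mem_cons_of_mem hb)
    have hau : a ≠ u := fun h => hat (h ▸ hut)
    obtain ⟨hadom, hanev⟩ := hdom a (Finset.mem_cons_self a t)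
    obtain ⟨hudom, hunev⟩ := hdom u (Finset.mem_cons_of_mem hut)
    rcases aux_dom_comparable hadom hudom hau hanev hunev with hc | hc
    · refine ⟨u, Finset.mem_cons_of_mem hut, fun w hw => ?_⟩
      rcases Finset.mem_cons.1 hw with rfl | hw
      · exact hc
      · exact hmin w hw
    · refine ⟨a, Finset.mem_cons_self a t, fun w hw => ?_⟩
      rcases Finset.mem_cons.1 hw with rfl | hw
      · exact ⟨aux_dominates_reach hadom, Or.inl rfl⟩
      · exact aux_dominates_trans (hmin w hw) hc

end Aux

/-- two distinct dominators `u, w` of a vertex `v` (both different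
from `v`) are comparable: `u` dominates `w` or `w` dominates `u`.
Consequently every vertex `v ≠ s` reachable from `s` has a unique immediate
dominator. -/
theorem dominators_comparable_and_unique_idom [Fintype V] (g : V → V → Prop)
    (s : V) :
    (∀ u w v : V, Dominates g s u v → Dominates g s w v →
      u ≠ w → u ≠ v → w ≠ v → (Dominates g s u w ∨ Dominates g s w u)) ∧
    (∀ v : V, v ≠ s → Reach g s v → ∃! u : V, IsIdom g s u v) := by
  constructor
  · exact fun u w v hu hw => aux_dom_comparable hu hw
  · intro v hv hr
    set D : Finset V := Finset.univ.filter (fun u => Dominates g s u v ∧ u ≠ v) with hD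
    have hsD : s ∈ D := by
      simp only [hD, Finset.mem_filter, Finset.mem_univ, true_and]
      exact ⟨aux_source_dominates hr, Ne.symm hv⟩
    obtain ⟨u, huD, hmin⟩ := aux_exists_min v D ⟨s, hsD⟩ (fun a ha => by
      simpa only [hD, Finset.mem_filter, Finset.mem_univ, true_and] using ha)
    simp only [hD, Finset.mem_filter, Finset.mem_univ, true_and] at huD
    refine ⟨u, ⟨huD.1, huD.2, fun w hw hwv => hmin w ?_⟩, ?_⟩
    · simp only [hD, Finset.mem_filter, Finset.mem_univ, true_and]
      exact ⟨hw, hwv⟩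
    · rintro y ⟨hydom, hynev, hymin⟩
      exact aux_dominates_antisymm
        (hmin y (by simp only [hD, Finset.mem_filter, Finset.mem_univ, true_and]; exact ⟨hydom, hynev⟩))
        (hymin u huD.1 huD.2)
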